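/- Let (X,V,E) be a compact graph-like space and let C ⊆ X be a subspace homeomorphic to the unit circle S¹. Then for every separation (A,B) of V, the set of edges of X that are contained in C and belong to the cut E(A,B) is finite and has even cardinality. -/

import Mathlib

open Set Topology Filter Function

universe u

/-- A compact graph-like space structure on a topological space `X`:
a closed zero-dimensional vertex set `V` together with an index type `E`
(carrying the discrete topology) such that `X \ V ≅ E × (0,1)`. -/
structure GraphLike (X : Type u) [TopologicalSpace X] where
  V : Set X
  closedV : IsClosed V
  zeroDimV : TotallyDisconnectedSpace V
  E : Type
  homeo :
    letI : TopologicalSpace E := ⊥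
    Nonempty ((Vᶜ : Set X) ≃ₜ (E × ↥(Set.Ioo (0 : ℝ) 1)))

variable {X : Type u} [TopologicalSpace X]

/-- An edge of a graph-like space: a connected component of `X \ V`. -/
def GraphLike.IsEdge (G : GraphLike X) (e : Set X) : Prop :=
  ∃ x, x ∈ (G.V)ᶜ ∧ e = connectedComponentIn (G.V)ᶜ x

/-- A subset of the vertex set which is clopen in the subspace `V`. -/
def GraphLike.ClopenIn (G : GraphLike X) (C : Set X) : Prop :=
  C ⊆ G.V ∧ IsClosed C ∧ IsClosed (G.V \ C)

/-- A separation of a graph-like space: a partition of the vertex set into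
two disjoint clopen pieces. -/
structure GraphLike.Separation (G : GraphLike X) where
  A : Set X
  B : Set X
  clopenA : G.ClopenIn A
  clopenB : G.ClopenIn B
  disjoint : A ∩ B = ∅
  union : A ∪ B = G.V

/-- The cut induced by a pair of vertex sets: all edges whose closure meets both. -/
def GraphLike.cut (G : GraphLike X) (A B : Set X) : Set (Set X) :=
  {e | G.IsEdge e ∧ (closure e ∩ A).Nonempty ∧ (closure e ∩ B).Nonempty}

/-- A cut is even if it is finite of even cardinality. -/
def GraphLike.EvenCut (G : GraphLike X) (A B : Set X) : Prop :=
  (G.cut A B).Finite ∧ Even (G.cut A B).ncard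

namespace CGL


def CutPairs (A B : Set ℝ) : Set (ℝ × ℝ) :=
  {p | p.1 < p.2 ∧ Ioo p.1 p.2 ∩ (A ∪ B) = ∅ ∧
       ((p.1 ∈ A ∧ p.2 ∈ B) ∨ (p.1 ∈ B ∧ p.2 ∈ A))}

lemma cutPairs_comm (A B : Set ℝ) : CutPairs A B = CutPairs B A := by
  ext p
  exact ⟨fun ⟨h1, h2, h3⟩ => ⟨h1, by rwa [union_comm], h3.symm⟩,
         fun ⟨h1, h2, h3⟩ => ⟨h1, by rwa [union_comm], h3.symm⟩⟩

lemma exists_cutPair {A B : Set ℝ} (hA : IsClosed A) (hB : IsClosed B)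
    (hd : Disjoint A B) {x y : ℝ} (hx : x ∈ A) (hy : y ∈ B) (hxy : x < y) :
    ∃ q : ℝ × ℝ, q ∈ CutPairs A B ∧ q.1 ∈ A ∧ q.2 ∈ B ∧ x ≤ q.1 ∧ q.2 ≤ y := by
  have hcA : IsCompact (A ∩ Icc x y) := isCompact_Icc.inter_left hA
  have hneA : (A ∩ Icc x y).Nonempty := ⟨x, hx, le_refl x, hxy.le⟩
  set z := sSup (A ∩ Icc x y) with hzdef
  have hz : z ∈ A ∩ Icc x y := hcA.sSup_mem hneA
  have hzy : z < y := lt_of_le_of_ne hz.2.2 (fun h => (Set.disjoint_left.mp hd (h ▸ hz.1)) hy)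
  have hcB : IsCompact (B ∩ Icc z y) := isCompact_Icc.inter_left hB
  have hneB : (B ∩ Icc z y).Nonempty := ⟨y, hy, hzy.le, le_refl y⟩
  set z' := sInf (B ∩ Icc z y) with hz'def
  have hz' : z' ∈ B ∩ Icc z y := hcB.sInf_mem hneB
  have hzz' : z < z' := lt_of_le_of_ne hz'.2.1
    (fun h => (Set.disjoint_left.mp hd hz.1) (h ▸ hz'.1))
  refine ⟨(z, z'), ⟨hzz', ?_, Or.inl ⟨hz.1, hz'.1⟩⟩, hz.1, hz'.1, hz.2.1, hz'.2.2⟩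
  rw [Set.eq_empty_iff_forall_notMem]
  rintro w ⟨⟨hw1, hw2⟩, hwAB⟩
  rcases hwAB with hwA | hwB
  · have : w ≤ z := le_csSup hcA.bddAbove ⟨hwA, le_trans hz.2.1 hw1.le, le_trans hw2.le hz'.2.2⟩
    exact absurd hw1 (not_lt.mpr this)
  · have : z' ≤ w := csInf_le hcB.bddBelow ⟨hwB, hw1.le, le_trans hw2.le hz'.2.2⟩
    exact absurd hw2 (not_lt.mpr this)

lemma cutPairs_injOn_fst {A B : Set ℝ} :
    ∀ p ∈ CutPairs A B, ∀ q ∈ CutPairs A B, p.1 = q.1 → p = q := by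
  rintro p ⟨hp1, hp2, hp3⟩ q ⟨hq1, hq2, hq3⟩ h
  have h2 : p.2 = q.2 := by
    by_contra hne
    have hp2mem : p.2 ∈ A ∪ B := by rcases hp3 with ⟨_, h⟩ | ⟨_, h⟩ <;> [exact Or.inr h; exact Or.inl h]
    have hq2mem : q.2 ∈ A ∪ B := by rcases hq3 with ⟨_, h⟩ | ⟨_, h⟩ <;> [exact Or.inr h; exact Or.inl h]
    rcases lt_or_gt_of_ne hne with hlt | hgt
    · exact (Set.eq_empty_iff_forall_notMem.mp hq2) p.2 ⟨⟨h ▸ hp1, hlt⟩, hp2mem⟩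
    · exact (Set.eq_empty_iff_forall_notMem.mp hp2) q.2 ⟨⟨h ▸ hq1, hgt⟩, hq2mem⟩
  exact Prod.ext h h2

lemma cutPairs_sep {A B : Set ℝ} {p q : ℝ × ℝ} (hp : p ∈ CutPairs A B)
    (hq : q ∈ CutPairs A B) (h : p.1 < q.1) : p.2 ≤ q.1 := by
  obtain ⟨hp1, hp2, hp3⟩ := hp
  obtain ⟨hq1, hq2, hq3⟩ := hq
  have hq1mem : q.1 ∈ A ∪ B := by rcases hq3 with ⟨h', _⟩ | ⟨h', _⟩ <;> [exact Or.inl h'; exact Or.inr h']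
  by_contra hc
  exact (Set.eq_empty_iff_forall_notMem.mp hp2) q.1 ⟨⟨h, not_le.mp hc⟩, hq1mem⟩

lemma exists_uniform_gap {A B : Set ℝ} {u v : ℝ} (hA : IsClosed A) (hB : IsClosed B)
    (hd : Disjoint A B) (hsub : A ∪ B ⊆ Icc u v) (hBne : B.Nonempty) :
    ∃ δ > 0, ∀ a ∈ A, ∀ b ∈ B, δ ≤ |a - b| := by
  rcases A.eq_empty_or_nonempty with hAe | hAne
  · exact ⟨1, one_pos, fun a ha => absurd ha (by simp [hAe])⟩
  have hAc : IsCompact A :=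
    isCompact_Icc.of_isClosed_subset hA (fun a ha => hsub (Or.inl ha))
  obtain ⟨a₀, ha₀, hmin⟩ := hAc.exists_isMinOn hAne (Metric.continuous_infDist_pt B).continuousOn
  have hpos : 0 < Metric.infDist a₀ B := by
    exact (hB.notMem_iff_infDist_pos hBne).mp (fun h => Set.disjoint_left.mp hd ha₀ h)
  refine ⟨_, hpos, fun a ha b hb => ?_⟩
  calc Metric.infDist a₀ B ≤ Metric.infDist a B := hmin ha
    _ ≤ dist a b := Metric.infDist_le_dist_of_mem hb
    _ = |a - b| := Real.dist_eq a b

lemma cutPairs_finite {A B : Set ℝ} {u v : ℝ} (hA : IsClosed A) (hB : IsClosed B)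
    (hd : Disjoint A B) (hsub : A ∪ B ⊆ Icc u v) : (CutPairs A B).Finite := by
  rcases B.eq_empty_or_nonempty with hBe | hBne
  · refine Set.Finite.subset (Set.finite_empty) ?_
    rintro p ⟨_, _, ⟨_, h⟩ | ⟨h, _⟩⟩ <;> simp [hBe] at h
  obtain ⟨δ, hδ, hgap⟩ := exists_uniform_gap hA hB hd hsub hBne
  have hlen : ∀ p ∈ CutPairs A B, p.1 + δ ≤ p.2 := by
    rintro p ⟨h1, _, h3⟩
    have : δ ≤ |p.1 - p.2| := by
      rcases h3 with ⟨ha, hb⟩ | ⟨hb, ha⟩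
      · exact hgap _ ha _ hb
      · rw [abs_sub_comm]; exact hgap _ ha _ hb
    rw [abs_sub_comm, abs_of_pos (by linarith)] at this
    linarith
  have hfirstmem : ∀ p ∈ CutPairs A B, p.1 ∈ Icc u v := by
    rintro p ⟨_, _, h3⟩
    rcases h3 with ⟨h, _⟩ | ⟨h, _⟩
    · exact hsub (Or.inl h)
    · exact hsub (Or.inr h)
  have hinj : Set.InjOn (fun p : ℝ × ℝ => ⌊p.1 / δ⌋) (CutPairs A B) := by
    intro p hp q hq hfq
    rcases lt_trichotomy p.1 q.1 with hlt | heq | hgt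
    · exfalso
      have h1 : p.1 + δ ≤ q.1 := le_trans (hlen p hp) (cutPairs_sep hp hq hlt)
      have : p.1 / δ + 1 ≤ q.1 / δ := by
        rw [le_div_iff₀ hδ, add_mul, one_mul, div_mul_cancel₀ _ (ne_of_gt hδ)]
        linarith
      have := Int.floor_le_floor (R := ℝ) this
      rw [Int.floor_add_one] at this
      simp only at hfq
      omega
    · exact cutPairs_injOn_fst p hp q hq heq
    · exfalso
      have h1 : q.1 + δ ≤ p.1 := le_trans (hlen q hq) (cutPairs_sep hq hp hgt)
      have : q.1 / δ + 1 ≤ p.1 / δ := by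
        rw [le_div_iff₀ hδ, add_mul, one_mul, div_mul_cancel₀ _ (ne_of_gt hδ)]
        linarith
      have := Int.floor_le_floor (R := ℝ) this
      rw [Int.floor_add_one] at this
      simp only at hfq
      omega
  refine Set.Finite.of_finite_image ?_ hinj
  refine Set.Finite.subset (Set.finite_Icc ⌊u / δ⌋ ⌊v / δ⌋) ?_
  rintro n ⟨p, hp, rfl⟩
  have hm := hfirstmem p hp
  constructor
  · exact Int.floor_le_floor (by gcongr; exact hm.1)
  · exact Int.floor_le_floor (by gcongr; exact hm.2)

lemma cutPairs_even_aux : ∀ (n : ℕ) (u v : ℝ) (A B : Set ℝ), IsClosed A → IsClosed B →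
    Disjoint A B → A ∪ B ⊆ Icc u v → u ∈ A ∪ B → v ∈ A ∪ B →
    (CutPairs A B).ncard = n → (Even n ↔ (u ∈ A ↔ v ∈ A)) := by
  intro n
  induction n with
  | zero =>
    intro u v A B hA hB hd hsub hu hv hn
    have hfin := cutPairs_finite hA hB hd hsub
    have hempty : CutPairs A B = ∅ := (Set.ncard_eq_zero hfin).mp hn
    have huv : u ≤ v := (hsub hu).2
    simp only [Even.zero, true_iff]
    rcases hu with huA | huB <;> rcases hv with hvA | hvB
    · exact iff_of_true huA hvA
    · exfalso
      have hne : u ≠ v := fun h => Set.disjoint_left.mp hd huA (h ▸ hvB)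
      obtain ⟨q, hq, _⟩ := exists_cutPair hA hB hd huA hvB (lt_of_le_of_ne huv hne)
      rw [hempty] at hq; exact hq
    · exfalso
      have hne : u ≠ v := fun h => Set.disjoint_left.mp hd hvA (h ▸ huB)
      obtain ⟨q, hq, _⟩ := exists_cutPair hB hA hd.symm huB hvA (lt_of_le_of_ne huv hne)
      rw [← cutPairs_comm, hempty] at hq; exact hq
    · exact iff_of_false (fun h => Set.disjoint_left.mp hd h huB)
        (fun h => Set.disjoint_left.mp hd h hvB)
  | succ n ih =>
    intro u v A B hA hB hd hsub hu hv hn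
    have hfin := cutPairs_finite hA hB hd hsub
    have hne : (CutPairs A B).Nonempty := by
      rw [Set.nonempty_iff_ne_empty]
      intro h
      rw [h, Set.ncard_empty] at hn
      omega
    obtain ⟨p, hp, hmin⟩ := Set.exists_min_image (CutPairs A B) Prod.fst hfin hne
    obtain ⟨hplt, hpgap, hpcol⟩ := id hp
    -- every other pair starts at or after p.2
    have hafter : ∀ q ∈ CutPairs A B, q ≠ p → p.2 ≤ q.1 := by
      intro q hq hqp
      have h1 : p.1 ≤ q.1 := hmin q hq
      rcases lt_or_eq_of_le h1 with hlt | heq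
      · exact cutPairs_sep ⟨hplt, hpgap, hpcol⟩ hq hlt
      · exact absurd (cutPairs_injOn_fst q hq p ⟨hplt, hpgap, hpcol⟩ heq.symm) hqp
    -- p.1 has the same colour as u
    have hup1 : u ≤ p.1 := by
      rcases hpcol with ⟨h, _⟩ | ⟨h, _⟩
      · exact (hsub (Or.inl h)).1
      · exact (hsub (Or.inr h)).1
    have hcolu : (p.1 ∈ A ∧ u ∈ A) ∨ (p.1 ∈ B ∧ u ∈ B) := by
      rcases hu with huA | huB <;> rcases hpcol with ⟨hx, _⟩ | ⟨hx, _⟩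
      · exact Or.inl ⟨hx, huA⟩
      · exfalso
        have hlt : u < p.1 := lt_of_le_of_ne hup1
          (fun h => Set.disjoint_left.mp hd huA (h ▸ hx))
        obtain ⟨q, hq, _, _, _, hq4⟩ := exists_cutPair hA hB hd huA hx hlt
        have : p.1 ≤ q.1 := hmin q hq
        have : q.1 < q.2 := hq.1
        linarith
      · exfalso
        have hlt : u < p.1 := lt_of_le_of_ne hup1
          (fun h => Set.disjoint_left.mp hd hx (h ▸ huB))
        obtain ⟨q, hq, _, _, _, hq4⟩ := exists_cutPair hB hA hd.symm huB hx hlt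
        rw [← cutPairs_comm] at hq
        have : p.1 ≤ q.1 := hmin q hq
        have : q.1 < q.2 := hq.1
        linarith
      · exact Or.inr ⟨hx, huB⟩
    -- restricted sets
    set A' := A ∩ Icc p.2 v with hA'def
    set B' := B ∩ Icc p.2 v with hB'def
    have hp2v : p.2 ≤ v := by
      rcases hpcol with ⟨_, h⟩ | ⟨_, h⟩
      · exact (hsub (Or.inr h)).2
      · exact (hsub (Or.inl h)).2
    have hp2mem : p.2 ∈ A ∪ B := by
      rcases hpcol with ⟨_, h⟩ | ⟨_, h⟩ <;> [exact Or.inr h; exact Or.inl h]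
    have hsetEq : CutPairs A' B' = CutPairs A B \ {p} := by
      ext q
      constructor
      · rintro ⟨h1, h2, h3⟩
        have hq1 : q.1 ∈ (A ∪ B) ∩ Icc p.2 v := by
          rcases h3 with ⟨⟨h, h'⟩, _⟩ | ⟨⟨h, h'⟩, _⟩ <;> [exact ⟨Or.inl h, h'⟩; exact ⟨Or.inr h, h'⟩]
        have hgap' : Ioo q.1 q.2 ∩ (A ∪ B) = ∅ := by
          rw [Set.eq_empty_iff_forall_notMem]
          rintro w ⟨hw1, hw2⟩
          have hwv : w ≤ v := (hsub hw2).2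
          have hwp2 : p.2 ≤ w := le_trans hq1.2.1 hw1.1.le
          refine (Set.eq_empty_iff_forall_notMem.mp h2) w ⟨hw1, ?_⟩
          rcases hw2 with h | h
          · exact Or.inl ⟨h, hwp2, hwv⟩
          · exact Or.inr ⟨h, hwp2, hwv⟩
        have hcol' : (q.1 ∈ A ∧ q.2 ∈ B) ∨ (q.1 ∈ B ∧ q.2 ∈ A) := by
          rcases h3 with ⟨⟨h, _⟩, ⟨h', _⟩⟩ | ⟨⟨h, _⟩, ⟨h', _⟩⟩
          · exact Or.inl ⟨h, h'⟩
          · exact Or.inr ⟨h, h'⟩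
        refine ⟨⟨h1, hgap', hcol'⟩, ?_⟩
        intro hqp
        rw [Set.mem_singleton_iff] at hqp
        have : p.2 ≤ p.1 := by have h := hq1.2.1; rw [hqp] at h; exact h
        linarith [hplt]
      · rintro ⟨hq, hqp⟩
        rw [Set.mem_singleton_iff] at hqp
        have hy := hafter q hq hqp
        obtain ⟨h1, h2, h3⟩ := hq
        have hq1v : q.1 ≤ v := by
          rcases h3 with ⟨h, _⟩ | ⟨h, _⟩ <;> [exact (hsub (Or.inl h)).2; exact (hsub (Or.inr h)).2]
        have hq2v : q.2 ≤ v := by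
          rcases h3 with ⟨_, h⟩ | ⟨_, h⟩ <;> [exact (hsub (Or.inr h)).2; exact (hsub (Or.inl h)).2]
        refine ⟨h1, ?_, ?_⟩
        · rw [Set.eq_empty_iff_forall_notMem]
          rintro w ⟨hw1, hw2⟩
          refine (Set.eq_empty_iff_forall_notMem.mp h2) w ⟨hw1, ?_⟩
          rcases hw2 with ⟨h, _⟩ | ⟨h, _⟩ <;> [exact Or.inl h; exact Or.inr h]
        · rcases h3 with ⟨h, h'⟩ | ⟨h, h'⟩
          · exact Or.inl ⟨⟨h, hy, hq1v⟩, ⟨h', le_trans hy h1.le, hq2v⟩⟩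
          · exact Or.inr ⟨⟨h, hy, hq1v⟩, ⟨h', le_trans hy h1.le, hq2v⟩⟩
    have hn' : (CutPairs A' B').ncard = n := by
      rw [hsetEq, Set.ncard_diff_singleton_of_mem hp, hn]
      omega
    have hIH := ih p.2 v A' B' (hA.inter isClosed_Icc) (hB.inter isClosed_Icc)
      (hd.mono Set.inter_subset_left Set.inter_subset_left)
      (Set.union_subset Set.inter_subset_right Set.inter_subset_right)
      (by
        rcases hp2mem with h | h
        · exact Or.inl ⟨h, le_refl _, hp2v⟩
        · exact Or.inr ⟨h, le_refl _, hp2v⟩)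
      (by
        have hvm : v ∈ Icc p.2 v := ⟨hp2v, le_refl v⟩
        rcases hv with h | h
        · exact Or.inl ⟨h, hvm⟩
        · exact Or.inr ⟨h, hvm⟩)
      hn'
    rw [Nat.even_add_one]
    rw [hIH]
    have e1 : p.2 ∈ A' ↔ p.2 ∈ A :=
      ⟨fun h => h.1, fun h => ⟨h, le_refl _, hp2v⟩⟩
    have e2 : v ∈ A' ↔ v ∈ A := ⟨fun h => h.1, fun h => ⟨h, hp2v, le_refl v⟩⟩
    have e3 : p.2 ∈ A ↔ ¬ (p.1 ∈ A) := by
      rcases hpcol with ⟨hx, hy⟩ | ⟨hx, hy⟩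
      · exact iff_of_false (fun h => Set.disjoint_left.mp hd h hy) (fun h => h hx)
      · exact iff_of_true hy (fun h => Set.disjoint_left.mp hd h hx)
    have e4 : p.1 ∈ A ↔ u ∈ A := by
      rcases hcolu with ⟨h1, h2⟩ | ⟨h1, h2⟩
      · exact iff_of_true h1 h2
      · exact iff_of_false (fun h => Set.disjoint_left.mp hd h h1)
          (fun h => Set.disjoint_left.mp hd h h2)
    have h1 := Set.disjoint_left.mp hd
    constructor
    · intro h
      by_cases hb : v ∈ A
      · exact iff_of_true (by by_contra hua; exact h (iff_of_true (e1.mpr (e3.mpr (fun hx => hua (e4.mp hx)))) (e2.mpr hb))) hb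
      · constructor
        · intro hua
          exact absurd (iff_of_false (fun hpa => (e3.mp (e1.mp hpa)) (e4.mpr hua))
            (fun hva => hb (e2.mp hva))) h
        · intro hb'; exact absurd hb' hb
    · intro h hiff
      by_cases hb : v ∈ A
      · have hua : u ∈ A := h.mpr hb
        have : p.2 ∈ A' := hiff.mpr (e2.mpr hb)
        exact (e3.mp (e1.mp this)) (e4.mpr hua)
      · have hua : u ∉ A := fun hua => hb (h.mp hua)
        have : p.2 ∈ A' := e1.mpr (e3.mpr (fun hx => hua (e4.mp hx)))
        exact hb (e2.mp (hiff.mp this))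

lemma cutPairs_even {A B : Set ℝ} {u v : ℝ} (hA : IsClosed A) (hB : IsClosed B)
    (hd : Disjoint A B) (hsub : A ∪ B ⊆ Icc u v) (hu : u ∈ A) (hv : v ∈ A) :
    Even (CutPairs A B).ncard :=
  (cutPairs_even_aux _ u v A B hA hB hd hsub (Or.inl hu) (Or.inl hv) rfl).mpr
    (iff_of_true hu hv)



variable {Y Z : Type*} [TopologicalSpace Y] [TopologicalSpace Z]

lemma mem_closure_iff_of_isEmbedding {f : Y → Z} (hf : IsEmbedding f) (T : Set Y) (y : Y) :
    y ∈ closure T ↔ f y ∈ closure (f '' T) := by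
  rw [hf.closure_eq_preimage_closure_image T]; rfl

lemma isPreconnected_image_iff_of_isEmbedding {f : Y → Z} (hf : IsEmbedding f) (T : Set Y) :
    IsPreconnected (f '' T) ↔ IsPreconnected T :=
  hf.toIsInducing.isPreconnected_image

/-- An open bounded nonempty preconnected subset of `ℝ` is an open interval. -/
lemma eq_Ioo_of_isOpen_preconnected {s : Set ℝ} (hc : IsPreconnected s) (ho : IsOpen s)
    (hne : s.Nonempty) (hbb : BddBelow s) (hba : BddAbove s) :
    s = Ioo (sInf s) (sSup s) ∧ sInf s < sSup s := by
  have hInf : sInf s ∉ s := by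
    intro h
    obtain ⟨ε, hε, hball⟩ := Metric.isOpen_iff.mp ho _ h
    have : sInf s - ε / 2 ∈ s := hball (by
      rw [Metric.mem_ball, Real.dist_eq, abs_of_nonpos (by linarith)]
      linarith)
    have := csInf_le hbb this
    linarith
  have hSup : sSup s ∉ s := by
    intro h
    obtain ⟨ε, hε, hball⟩ := Metric.isOpen_iff.mp ho _ h
    have : sSup s + ε / 2 ∈ s := hball (by
      rw [Metric.mem_ball, Real.dist_eq, abs_of_nonneg (by linarith)]
      linarith)
    have := le_csSup hba this
    linarith
  obtain ⟨w, hw⟩ := hne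
  have h1 : sInf s ≤ w := csInf_le hbb hw
  have h2 : w ≤ sSup s := le_csSup hba hw
  have hlt : sInf s < sSup s := by
    rcases eq_or_lt_of_le (h1.trans h2) with h | h
    · exfalso
      have : w = sInf s := le_antisymm (h ▸ h2) h1
      exact hInf (this ▸ hw)
    · exact h
  refine ⟨Subset.antisymm ?_ ?_, hlt⟩
  · intro t ht
    have l1 : sInf s ≤ t := csInf_le hbb ht
    have l2 : t ≤ sSup s := le_csSup hba ht
    constructor
    · rcases eq_or_lt_of_le l1 with h | h
      · exact absurd (h ▸ ht) hInf
      · exact h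
    · rcases eq_or_lt_of_le l2 with h | h
      · exact absurd (h ▸ ht) hSup
      · exact h
  · intro t ht
    obtain ⟨a, ha, hat⟩ := exists_lt_of_csInf_lt ⟨w, hw⟩ ht.1
    obtain ⟨b, hb, htb⟩ := exists_lt_of_lt_csSup ⟨w, hw⟩ ht.2
    exact hc.ordConnected.out ha hb ⟨hat.le, htb.le⟩



lemma exists_abut {G : Set ℝ} {c : ℝ} (hG : IsPreconnected G) (hcG : c ∉ G)
    (hcc : c ∈ closure G) :
    (∃ α < c, Ioo α c ⊆ G) ∨ (∃ β > c, Ioo c β ⊆ G) := by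
  have hside : G ⊆ Iio c ∨ G ⊆ Ioi c := by
    by_contra h
    push_neg at h
    obtain ⟨hn1, hn2⟩ := h
    obtain ⟨a, haG, hac⟩ := not_subset.mp hn1
    obtain ⟨b, hbG, hbc⟩ := not_subset.mp hn2
    have ha : c < a := lt_of_le_of_ne (not_lt.mp hac) (fun h => hcG (h ▸ haG))
    have hb : b < c := lt_of_le_of_ne (not_lt.mp (by simpa using hbc))
      (fun h => hcG (h ▸ hbG))
    exact hcG (hG.ordConnected.out hbG haG ⟨hb.le, ha.le⟩)
  rcases hside with hside | hside
  · left
    obtain ⟨g, hgG, hgd⟩ := Metric.mem_closure_iff.mp hcc 1 one_pos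
    have hgc : g < c := hside hgG
    refine ⟨g, hgc, fun w hw => ?_⟩
    obtain ⟨g', hg'G, hg'd⟩ := Metric.mem_closure_iff.mp hcc (c - w) (by linarith [hw.2])
    have hg'c : g' < c := hside hg'G
    have hwg' : w ≤ g' := by
      rw [Real.dist_eq, abs_of_nonneg (by linarith)] at hg'd
      linarith
    exact hG.ordConnected.out hgG hg'G ⟨hw.1.le, hwg'⟩
  · right
    obtain ⟨g, hgG, hgd⟩ := Metric.mem_closure_iff.mp hcc 1 one_pos
    have hgc : c < g := hside hgG
    refine ⟨g, hgc, fun w hw => ?_⟩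
    obtain ⟨g', hg'G, hg'd⟩ := Metric.mem_closure_iff.mp hcc (w - c) (by linarith [hw.1])
    have hg'c : c < g' := hside hg'G
    have hwg' : g' ≤ w := by
      rw [Real.dist_eq, abs_of_nonpos (by linarith)] at hg'd
      linarith
    exact hG.ordConnected.out hg'G hgG ⟨hwg', hw.2.le⟩

lemma not_mem_closure_of_two_sided {G₁ G₂ D : Set ℝ} {c : ℝ}
    (h1 : IsPreconnected G₁) (h2 : IsPreconnected G₂) (hd : Disjoint G₁ G₂)
    (hc1 : c ∉ G₁) (hc2 : c ∉ G₂) (hcc1 : c ∈ closure G₁) (hcc2 : c ∈ closure G₂)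
    (hD : Disjoint D (G₁ ∪ G₂ ∪ {c})) : c ∉ closure D := by
  have key : ∃ α β : ℝ, α < c ∧ c < β ∧ Ioo α β ⊆ G₁ ∪ G₂ ∪ {c} := by
    rcases exists_abut h1 hc1 hcc1 with ⟨α, hα, hsub1⟩ | ⟨β, hβ, hsub1⟩ <;>
      rcases exists_abut h2 hc2 hcc2 with ⟨α', hα', hsub2⟩ | ⟨β', hβ', hsub2⟩
    · exfalso
      have hw : (max α α' + c) / 2 ∈ Ioo α c ∩ Ioo α' c := by
        constructor <;> constructor
        · have := le_max_left α α'; have := max_lt hα hα'; linarith [le_max_left α α']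
        · have := max_lt hα hα'; linarith
        · have := le_max_right α α'; have := max_lt hα hα'; linarith
        · have := max_lt hα hα'; linarith
      exact Set.disjoint_left.mp hd (hsub1 hw.1) (hsub2 hw.2)
    · refine ⟨α, β', hα, hβ', fun w hw => ?_⟩
      rcases lt_trichotomy w c with h | h | h
      · exact Or.inl (Or.inl (hsub1 ⟨hw.1, h⟩))
      · exact Or.inr (h ▸ rfl)
      · exact Or.inl (Or.inr (hsub2 ⟨h, hw.2⟩))
    · refine ⟨α', β, hα', hβ, fun w hw => ?_⟩
      rcases lt_trichotomy w c with h | h | h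
      · exact Or.inl (Or.inr (hsub2 ⟨hw.1, h⟩))
      · exact Or.inr (h ▸ rfl)
      · exact Or.inl (Or.inl (hsub1 ⟨h, hw.2⟩))
    · exfalso
      have hw : (min β β' + c) / 2 ∈ Ioo c β ∩ Ioo c β' := by
        constructor <;> constructor
        · have := lt_min hβ hβ'; linarith
        · have := min_le_left β β'; have := lt_min hβ hβ'; linarith
        · have := lt_min hβ hβ'; linarith
        · have := min_le_right β β'; have := lt_min hβ hβ'; linarith
      exact Set.disjoint_left.mp hd (hsub1 hw.1) (hsub2 hw.2)
  obtain ⟨α, β, hα, hβ, hsub⟩ := key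
  intro hmem
  obtain ⟨d, hdo, hdD⟩ := mem_closure_iff.mp hmem (Ioo α β) isOpen_Ioo ⟨hα, hβ⟩
  exact Set.disjoint_left.mp hD hdD (hsub hdo)




lemma edge_structure (G : GraphLike X) {x₀ : X} (hx₀ : x₀ ∈ (G.V)ᶜ) :
    IsOpen (connectedComponentIn (G.V)ᶜ x₀) ∧
    closure (connectedComponentIn (G.V)ᶜ x₀) ∩ (G.V)ᶜ ⊆ connectedComponentIn (G.V)ᶜ x₀ ∧
    ∃ F : ↥(Set.Ioo (0:ℝ) 1) → X, IsEmbedding F ∧ range F = connectedComponentIn (G.V)ᶜ x₀ := by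
  letI : TopologicalSpace G.E := ⊥
  haveI : DiscreteTopology G.E := discreteTopology_bot _
  haveI : PreconnectedSpace ↥(Ioo (0:ℝ) 1) := Subtype.preconnectedSpace isPreconnected_Ioo
  obtain ⟨ψ⟩ := G.homeo
  set x₀' : ↥((G.V)ᶜ) := ⟨x₀, hx₀⟩ with hx₀'def
  set i := (ψ x₀').1 with hidef
  have hcc : connectedComponent (ψ x₀') = {i} ×ˢ (univ : Set ↥(Ioo (0:ℝ) 1)) := by
    apply Subset.antisymm
    · exact ((isClopen_discrete {i}).prod isClopen_univ).connectedComponent_subset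
        ⟨rfl, trivial⟩
    · rw [Set.singleton_prod]
      apply IsPreconnected.subset_connectedComponent
      · exact isPreconnected_univ.image _ (Continuous.prodMk_right i).continuousOn
      · exact ⟨(ψ x₀').2, trivial, Prod.ext rfl rfl⟩
  have himg : ψ '' connectedComponent x₀' = connectedComponent (ψ x₀') := by
    rw [← connectedComponentIn_univ, ψ.image_connectedComponentIn (mem_univ _),
      image_univ, Homeomorph.range_coe, connectedComponentIn_univ]
  have hK : connectedComponent x₀' = ψ ⁻¹' ({i} ×ˢ (univ : Set ↥(Ioo (0:ℝ) 1))) := by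
    rw [← hcc, ← himg, Homeomorph.preimage_image]
  have heK : connectedComponentIn (G.V)ᶜ x₀ = Subtype.val '' connectedComponent x₀' :=
    connectedComponentIn_eq_image hx₀
  have hopen : IsOpen (connectedComponentIn (G.V)ᶜ x₀) := by
    rw [heK, hK]
    exact G.closedV.isOpen_compl.isOpenMap_subtype_val _
      (ψ.continuous.isOpen_preimage _ ((isOpen_discrete _).prod isOpen_univ))
  have hcl : closure (connectedComponentIn (G.V)ᶜ x₀) ∩ (G.V)ᶜ ⊆
      connectedComponentIn (G.V)ᶜ x₀ := by
    rintro z ⟨hzc, hzV⟩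
    rw [heK] at hzc ⊢
    have h2 : (⟨z, hzV⟩ : ↥((G.V)ᶜ)) ∈ closure (connectedComponent x₀') := by
      rw [mem_closure_iff_of_isEmbedding IsEmbedding.subtypeVal]
      exact hzc
    rw [isClosed_connectedComponent.closure_eq] at h2
    exact ⟨_, h2, rfl⟩
  refine ⟨hopen, hcl, fun t => (ψ.symm (i, t) : X), ?_, ?_⟩
  · exact IsEmbedding.subtypeVal.comp (ψ.symm.isEmbedding.comp (isEmbedding_prodMkRight i))
  · rw [heK, hK]
    ext z
    constructor
    · rintro ⟨t, rfl⟩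
      exact ⟨ψ.symm (i, t), by simp, rfl⟩
    · rintro ⟨w, hw, rfl⟩
      refine ⟨(ψ w).2, ?_⟩
      have h3 : ((i, (ψ w).2) : G.E × ↥(Ioo (0:ℝ) 1)) = ψ w := Prod.ext hw.1.symm rfl
      show (↑(ψ.symm (i, (ψ w).2)) : X) = ↑w
      rw [h3, ψ.symm_apply_apply]



variable {X : Type*} [TopologicalSpace X]

lemma circle_param {C : Set X} (h : ↥C ≃ₜ Circle) {w₀ : X} (hw₀ : w₀ ∈ C) :
    ∃ q : ℝ → X, Continuous q ∧ (∀ t, q t ∈ C) ∧ q 0 = w₀ ∧ q (2*Real.pi) = w₀ ∧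
      InjOn q (Ioo 0 (2*Real.pi)) ∧ (∀ x ∈ C, x ≠ w₀ → x ∈ q '' (Ioo 0 (2*Real.pi))) ∧
      (∀ t ∈ Ioo 0 (2*Real.pi), q t ≠ w₀) ∧
      (∀ U : Set ℝ, IsOpen U → ∃ O : Set X, IsOpen O ∧ q '' U = O ∩ C) ∧
      IsEmbedding (fun t : ↥(Ioo 0 (2*Real.pi)) => q ↑t) := by
  haveI : Fact (0 < 2*Real.pi) := ⟨Real.two_pi_pos⟩
  set hac := AddCircle.homeomorphCircle' with hacdef
  set c₀ : Circle := h ⟨w₀, hw₀⟩ with hc₀def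
  set rot : Circle ≃ₜ Circle := Homeomorph.mulLeft c₀ with hrotdef
  set g : AddCircle (2*Real.pi) → X := fun z => ((h.symm (rot (hac z)) : ↥C) : X) with hgdef
  have hg_emb : IsEmbedding g :=
    IsEmbedding.subtypeVal.comp (h.symm.isEmbedding.comp (rot.isEmbedding.comp hac.isEmbedding))
  have hg_cont : Continuous g := hg_emb.continuous
  have hcoe_cont : Continuous (fun t : ℝ => (t : AddCircle (2*Real.pi))) :=
    AddCircle.continuous_mk' _
  set q : ℝ → X := fun t => g ↑t with hqdef
  have hq_cont : Continuous q := hg_cont.comp hcoe_cont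
  have hq_mem : ∀ t, q t ∈ C := fun t => (h.symm (rot (hac ↑t))).2
  have hg0 : g 0 = w₀ := by
    have h1 : ((0:ℝ) : AddCircle (2*Real.pi)) = 0 := by
      rw [QuotientAddGroup.mk_zero]
    have h2 : hac (0 : AddCircle (2*Real.pi)) = 1 := by
      rw [← h1, hacdef, AddCircle.homeomorphCircle'_apply_mk, Circle.exp_zero]
    show ((h.symm (rot (hac 0)) : ↥C) : X) = w₀
    rw [h2, hrotdef]
    show ((h.symm (c₀ * 1) : ↥C) : X) = w₀
    rw [mul_one, hc₀def, Homeomorph.symm_apply_apply]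
  have hq0 : q 0 = w₀ := by
    show g ((0:ℝ) : AddCircle (2*Real.pi)) = w₀
    rw [QuotientAddGroup.mk_zero, hg0]
  have hqp : q (2*Real.pi) = w₀ := by
    show g ((2*Real.pi : ℝ) : AddCircle (2*Real.pi)) = w₀
    rw [AddCircle.coe_period, hg0]
  have hinjIco : ∀ s ∈ Ico (0:ℝ) (2*Real.pi), ∀ t ∈ Ico (0:ℝ) (2*Real.pi),
      ((s : AddCircle (2*Real.pi)) = t) → s = t := by
    intro s hs t ht hst
    rwa [AddCircle.coe_eq_coe_iff_of_mem_Ico (by rwa [zero_add]) (by rwa [zero_add])] at hst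
  have hq_inj : InjOn q (Ioo 0 (2*Real.pi)) := by
    intro s hs t ht hst
    exact hinjIco s (Ioo_subset_Ico_self hs) t (Ioo_subset_Ico_self ht)
      (hg_emb.injective hst)
  have hne : ∀ t ∈ Ioo 0 (2*Real.pi), q t ≠ w₀ := by
    intro t ht hqt
    have h1 : (↑t : AddCircle (2*Real.pi)) = ((0:ℝ) : AddCircle (2*Real.pi)) := by
      apply hg_emb.injective
      show q t = q 0
      rw [hqt, hq0]
    have := hinjIco t (Ioo_subset_Ico_self ht) 0 ⟨le_refl 0, Real.two_pi_pos⟩ h1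
    exact absurd (this ▸ ht.1) (lt_irrefl 0)
  have hrange : range g = C := by
    ext x
    constructor
    · rintro ⟨z, rfl⟩; exact (h.symm (rot (hac z))).2
    · intro hx
      refine ⟨hac.symm (rot.symm (h ⟨x, hx⟩)), ?_⟩
      show ((h.symm (rot (hac (hac.symm (rot.symm (h ⟨x, hx⟩))))) : ↥C) : X) = x
      rw [Homeomorph.apply_symm_apply, Homeomorph.apply_symm_apply,
        Homeomorph.symm_apply_apply]
  have hsurj : ∀ x ∈ C, x ≠ w₀ → x ∈ q '' (Ioo 0 (2*Real.pi)) := by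
    intro x hx hxw
    obtain ⟨z, hzx⟩ : x ∈ range g := hrange ▸ hx
    obtain ⟨b, hb, hbz⟩ := AddCircle.eq_coe_Ico z
    have hb0 : b ≠ 0 := by
      rintro rfl
      apply hxw
      rw [← hzx, ← hbz, QuotientAddGroup.mk_zero, hg0]
    exact ⟨b, ⟨lt_of_le_of_ne hb.1 (Ne.symm hb0), hb.2⟩, by rw [hqdef]; simp only; rw [hbz, hzx]⟩
  have hcoe_open : IsOpenMap (fun t : ℝ => (t : AddCircle (2*Real.pi))) :=
    QuotientAddGroup.isOpenMap_coe
  have hopen_img : ∀ U : Set ℝ, IsOpen U → ∃ O : Set X, IsOpen O ∧ q '' U = O ∩ C := by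
    intro U hU
    have hW : IsOpen ((fun t : ℝ => (t : AddCircle (2*Real.pi))) '' U) := hcoe_open U hU
    obtain ⟨O, hO, hOW⟩ := hg_emb.toIsInducing.isOpen_iff.mp hW
    refine ⟨O, hO, ?_⟩
    have : q '' U = g '' ((fun t : ℝ => (t : AddCircle (2*Real.pi))) '' U) := by
      rw [← image_comp]; rfl
    rw [this, ← hOW, image_preimage_eq_inter_range, hrange]
  have hm_emb : IsEmbedding (fun t : ↥(Ioo 0 (2*Real.pi)) =>
      ((↑t : ℝ) : AddCircle (2*Real.pi))) := by
    apply IsOpenEmbedding.isEmbedding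
    apply IsOpenEmbedding.of_continuous_injective_isOpenMap
    · exact hcoe_cont.comp continuous_subtype_val
    · intro s t hst
      exact Subtype.ext (hinjIco _ (Ioo_subset_Ico_self s.2) _ (Ioo_subset_Ico_self t.2) hst)
    · intro U hU
      obtain ⟨U', hU', rfl⟩ := isOpen_induced_iff.mp hU
      have heq : (fun t : ↥(Ioo 0 (2*Real.pi)) => ((↑t : ℝ) : AddCircle (2*Real.pi))) ''
          (Subtype.val ⁻¹' U') =
          (fun t : ℝ => (t : AddCircle (2*Real.pi))) '' (U' ∩ Ioo 0 (2*Real.pi)) := by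
        ext z
        constructor
        · rintro ⟨t, ht, rfl⟩; exact ⟨↑t, ⟨ht, t.2⟩, rfl⟩
        · rintro ⟨t, ⟨ht1, ht2⟩, rfl⟩; exact ⟨⟨t, ht2⟩, ht1, rfl⟩
      rw [heq]
      exact hcoe_open _ (hU'.inter isOpen_Ioo)
  have hEF : IsEmbedding (fun t : ↥(Ioo 0 (2*Real.pi)) => q ↑t) := hg_emb.comp hm_emb
  exact ⟨q, hq_cont, hq_mem, hq0, hqp, hq_inj, hsurj, hne, hopen_img, hEF⟩


end CGL

/-- For a topological circle `C` in a compact graph-like space and any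
separation of the vertex set, the set of edges contained in `C` belonging to the induced
cut is finite of even cardinality. -/
theorem circle_meets_cut_even [CompactSpace X] [TopologicalSpace.MetrizableSpace X]
    (G : GraphLike X) {C : Set X} (hC : Nonempty (C ≃ₜ Circle)) (S : G.Separation) :
    {e | e ∈ G.cut S.A S.B ∧ e ⊆ C}.Finite ∧
    Even {e | e ∈ G.cut S.A S.B ∧ e ⊆ C}.ncard := by
  classical
  obtain ⟨h⟩ := hC
  haveI : CompactSpace ↥C := h.symm.compactSpace
  have hCcpt : IsCompact C := isCompact_iff_compactSpace.mpr this
  have hCcl : IsClosed C := hCcpt.isClosed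
  set K := {e | e ∈ G.cut S.A S.B ∧ e ⊆ C} with hKdef
  have hA_cl : IsClosed S.A := S.clopenA.2.1
  have hB_cl : IsClosed S.B := S.clopenB.2.1
  have hA_V : S.A ⊆ G.V := S.clopenA.1
  have hB_V : S.B ⊆ G.V := S.clopenB.1
  have hdisjAB : ∀ x, x ∈ S.A → x ∈ S.B → False := by
    intro x h1 h2
    have : x ∈ S.A ∩ S.B := ⟨h1, h2⟩
    rw [S.disjoint] at this
    exact this
  by_cases hAC : ∃ w, w ∈ S.A ∧ w ∈ C
  swap
  · have hKe : K = ∅ := by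
      rw [eq_empty_iff_forall_notMem]
      rintro e ⟨⟨hedge, hcutA, hcutB⟩, heC⟩
      obtain ⟨x, hx1, hx2⟩ := hcutA
      exact hAC ⟨x, hx2, (closure_minimal heC hCcl) hx1⟩
    rw [hKe]
    exact ⟨finite_empty, by simp⟩
  obtain ⟨w₀, hw₀A, hw₀C⟩ := hAC
  have hw₀V : w₀ ∈ G.V := hA_V hw₀A
  obtain ⟨q, hq_cont, hq_mem, hq0, hqp, hq_inj, hq_surj, hq_ne, hq_open, hq_emb⟩ :=
    CGL.circle_param h hw₀C
  set π2 := 2*Real.pi with hπ2def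
  have hπ2pos : 0 < π2 := Real.two_pi_pos
  set Ah := q ⁻¹' S.A ∩ Icc 0 π2 with hAhdef
  set Bh := q ⁻¹' S.B ∩ Icc 0 π2 with hBhdef
  have hAh_cl : IsClosed Ah := (hA_cl.preimage hq_cont).inter isClosed_Icc
  have hBh_cl : IsClosed Bh := (hB_cl.preimage hq_cont).inter isClosed_Icc
  have hABdisj : Disjoint Ah Bh :=
    Set.disjoint_left.mpr (fun t h1 h2 => hdisjAB (q t) h1.1 h2.1)
  have hABsub : Ah ∪ Bh ⊆ Icc 0 π2 :=
    union_subset inter_subset_right inter_subset_right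
  have h0A : (0:ℝ) ∈ Ah := ⟨by rw [mem_preimage, hq0]; exact hw₀A, left_mem_Icc.mpr hπ2pos.le⟩
  have hpA : π2 ∈ Ah := ⟨by rw [mem_preimage, hqp]; exact hw₀A, right_mem_Icc.mpr hπ2pos.le⟩
  -- closure of images of intervals
  have hclosure_img : ∀ x y : ℝ, x < y → closure (q '' Ioo x y) = q '' Icc x y := by
    intro x y hxy
    apply Subset.antisymm
    · exact closure_minimal (image_mono Ioo_subset_Icc_self)
        ((isCompact_Icc.image hq_cont).isClosed)
    · rw [← closure_Ioo hxy.ne]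
      exact image_closure_subset_closure_image hq_cont
  -- preconnectedness transfer
  have hpreconn : ∀ s : Set ℝ, s ⊆ Ioo 0 π2 →
      (IsPreconnected (q '' s) ↔ IsPreconnected s) := by
    intro s hs
    have e1 : q '' s = (fun t : ↥(Ioo 0 π2) => q ↑t) '' (Subtype.val ⁻¹' s) := by
      ext x
      constructor
      · rintro ⟨t, ht, rfl⟩; exact ⟨⟨t, hs ht⟩, ht, rfl⟩
      · rintro ⟨t, ht, rfl⟩; exact ⟨↑t, ht, rfl⟩
    have e2 : (Subtype.val : ↥(Ioo (0:ℝ) π2) → ℝ) '' (Subtype.val ⁻¹' s) = s := by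
      rw [image_preimage_eq_inter_range, Subtype.range_val]
      exact inter_eq_self_of_subset_left hs
    have i1 : IsPreconnected (q '' s) ↔
        IsPreconnected (Subtype.val ⁻¹' s : Set ↥(Ioo (0:ℝ) π2)) := by
      rw [e1, hq_emb.toIsInducing.isPreconnected_image]
    exact i1.trans ((IsInducing.subtypeVal.isPreconnected_image).symm.trans (by rw [e2]))
  -- membership bounds for cut pairs
  have hmemIcc : ∀ pr ∈ CGL.CutPairs Ah Bh, pr.1 ∈ Icc (0:ℝ) π2 ∧ pr.2 ∈ Icc (0:ℝ) π2 := by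
    rintro pr ⟨_, _, hcol⟩
    rcases hcol with ⟨h1, h2⟩ | ⟨h1, h2⟩ <;> exact ⟨h1.2, h2.2⟩
  -- ===== forward direction =====
  have hforward : ∀ e ∈ K, ∃ pr ∈ CGL.CutPairs Ah Bh, e = q '' Ioo pr.1 pr.2 := by
    rintro e ⟨⟨⟨x₀, hx₀V, hx₀e⟩, hcutA, hcutB⟩, heC⟩
    have heVc : e ⊆ (G.V)ᶜ := hx₀e ▸ connectedComponentIn_subset _ _
    have hene : e.Nonempty := ⟨x₀, hx₀e ▸ mem_connectedComponentIn hx₀V⟩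
    obtain ⟨hopen_e, hcl_e, -⟩ := CGL.edge_structure G hx₀V
    rw [← hx₀e] at hopen_e hcl_e
    set e' := q ⁻¹' e ∩ Ioo 0 π2 with he'def
    have he'img : q '' e' = e := by
      apply Subset.antisymm
      · rintro _ ⟨t, ⟨ht1, _⟩, rfl⟩; exact ht1
      · intro x hx
        obtain ⟨t, ht, rfl⟩ := hq_surj x (heC hx)
          (fun hxw => heVc hx (by rw [hxw]; exact hw₀V))
        exact ⟨t, ⟨hx, ht⟩, rfl⟩
    have he'open : IsOpen e' := (hopen_e.preimage hq_cont).inter isOpen_Ioo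
    have he'subIoo : e' ⊆ Ioo 0 π2 := inter_subset_right
    have he'pre : IsPreconnected e' := by
      rw [← hpreconn e' he'subIoo, he'img]
      exact hx₀e ▸ isPreconnected_connectedComponentIn
    have he'ne : e'.Nonempty := by
      have : (q '' e').Nonempty := by rw [he'img]; exact hene
      exact this.of_image
    obtain ⟨he'eq, hab⟩ := CGL.eq_Ioo_of_isOpen_preconnected he'pre he'open he'ne
      ⟨0, fun t ht => (he'subIoo ht).1.le⟩ ⟨π2, fun t ht => (he'subIoo ht).2.le⟩
    set a := sInf e' with hadef
    set b := sSup e' with hbdef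
    have haIcc : a ∈ Icc (0:ℝ) π2 := by
      constructor
      · exact le_csInf he'ne (fun t ht => (he'subIoo ht).1.le)
      · obtain ⟨t, ht⟩ := he'ne
        exact le_trans (csInf_le ⟨0, fun s hs => (he'subIoo hs).1.le⟩ ht) (he'subIoo ht).2.le
    have hbIcc : b ∈ Icc (0:ℝ) π2 := by
      constructor
      · obtain ⟨t, ht⟩ := he'ne
        exact le_trans (he'subIoo ht).1.le (le_csSup ⟨π2, fun s hs => (he'subIoo hs).2.le⟩ ht)
      · exact csSup_le he'ne (fun t ht => (he'subIoo ht).2.le)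
    have heq_e : e = q '' Ioo a b := by rw [← he'img, he'eq]
    have hclos : closure e = q '' Icc a b := by rw [heq_e, hclosure_img a b hab]
    have hendV : ∀ t ∈ Icc (0:ℝ) π2, t ∉ Ioo a b → q t ∈ closure e → q t ∈ G.V := by
      intro t htIcc htne hqcl
      by_contra hqt
      have hqe : q t ∈ e := hcl_e ⟨hqcl, hqt⟩
      by_cases hta : t ∈ Ioo 0 π2
      · have hte' : t ∈ e' := ⟨hqe, hta⟩
        rw [he'eq] at hte'
        exact htne hte'
      · have h0p : t = 0 ∨ t = π2 := by
          rcases eq_or_lt_of_le htIcc.1 with h' | h'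
          · exact Or.inl h'.symm
          · rcases eq_or_lt_of_le htIcc.2 with h2 | h2
            · exact Or.inr h2
            · exact absurd ⟨h', h2⟩ hta
        have hqw : q t = w₀ := by rcases h0p with h' | h' <;> rw [h'] <;> [exact hq0; exact hqp]
        exact hqt (by rw [hqw]; exact hw₀V)
    have hqaV : q a ∈ G.V := hendV a haIcc (fun hin => absurd hin.1 (lt_irrefl a))
      (by rw [hclos]; exact ⟨a, left_mem_Icc.mpr hab.le, rfl⟩)
    have hqbV : q b ∈ G.V := hendV b hbIcc (fun hin => absurd hin.2 (lt_irrefl b))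
      (by rw [hclos]; exact ⟨b, right_mem_Icc.mpr hab.le, rfl⟩)
    have hclosV : ∀ x ∈ closure e, x ∈ G.V → x = q a ∨ x = q b := by
      intro x hx hxV
      rw [hclos] at hx
      obtain ⟨t, htIcc, rfl⟩ := hx
      have htno : t ∉ Ioo a b := fun hin =>
        (heVc (by rw [heq_e]; exact ⟨t, hin, rfl⟩)) hxV
      rcases eq_or_lt_of_le htIcc.1 with h' | h'
      · exact Or.inl (by rw [← h'])
      · rcases eq_or_lt_of_le htIcc.2 with h2 | h2
        · exact Or.inr (by rw [h2])
        · exact absurd ⟨h', h2⟩ htno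
    obtain ⟨xa, hxa⟩ := hcutA
    obtain ⟨xb, hxb⟩ := hcutB
    have hxa' : xa = q a ∨ xa = q b := hclosV xa hxa.1 (hA_V hxa.2)
    have hxb' : xb = q a ∨ xb = q b := hclosV xb hxb.1 (hB_V hxb.2)
    have hcolor : (q a ∈ S.A ∧ q b ∈ S.B) ∨ (q a ∈ S.B ∧ q b ∈ S.A) := by
      rcases hxa' with h1 | h1 <;> rcases hxb' with h2 | h2
      · exact absurd (h2 ▸ hxb.2) (fun hc => hdisjAB _ (h1 ▸ hxa.2) hc)
      · exact Or.inl ⟨h1 ▸ hxa.2, h2 ▸ hxb.2⟩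
      · exact Or.inr ⟨h2 ▸ hxb.2, h1 ▸ hxa.2⟩
      · exact absurd (h2 ▸ hxb.2) (fun hc => hdisjAB _ (h1 ▸ hxa.2) hc)
    have hgap : Ioo a b ∩ (Ah ∪ Bh) = ∅ := by
      rw [eq_empty_iff_forall_notMem]
      rintro t ⟨ht1, ht2⟩
      have hqtV : q t ∈ G.V := by
        rcases ht2 with h' | h'
        · exact hA_V h'.1
        · exact hB_V h'.1
      exact heVc (by rw [heq_e]; exact ⟨t, ht1, rfl⟩) hqtV
    refine ⟨(a, b), ⟨hab, hgap, ?_⟩, heq_e⟩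
    rcases hcolor with ⟨h1, h2⟩ | ⟨h1, h2⟩
    · exact Or.inl ⟨⟨h1, haIcc⟩, ⟨h2, hbIcc⟩⟩
    · exact Or.inr ⟨⟨h1, haIcc⟩, ⟨h2, hbIcc⟩⟩
  -- ===== backward direction =====
  have hbackward : ∀ pr ∈ CGL.CutPairs Ah Bh, q '' Ioo pr.1 pr.2 ∈ K := by
    rintro ⟨x, y⟩ ⟨hxy, hgap, hcol⟩
    simp only at hxy hgap hcol ⊢
    have hx_mem : x ∈ Icc (0:ℝ) π2 := by rcases hcol with ⟨h',_⟩|⟨h',_⟩ <;> exact h'.2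
    have hy_mem : y ∈ Icc (0:ℝ) π2 := by rcases hcol with ⟨_,h'⟩|⟨_,h'⟩ <;> exact h'.2
    have hsubIoo : Ioo x y ⊆ Ioo 0 π2 := fun t ht =>
      ⟨lt_of_le_of_lt hx_mem.1 ht.1, lt_of_lt_of_le ht.2 hy_mem.2⟩
    set e := q '' Ioo x y with hedef
    have heC : e ⊆ C := by rintro _ ⟨t, _, rfl⟩; exact hq_mem t
    have heV : ∀ t ∈ Ioo x y, q t ∉ G.V := by
      intro t ht hqt
      have htI : t ∈ Icc (0:ℝ) π2 := Ioo_subset_Icc_self (hsubIoo ht)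
      have hmem : q t ∈ S.A ∪ S.B := by rw [S.union]; exact hqt
      rcases hmem with h' | h'
      · exact (eq_empty_iff_forall_notMem.mp hgap) t ⟨ht, Or.inl ⟨h', htI⟩⟩
      · exact (eq_empty_iff_forall_notMem.mp hgap) t ⟨ht, Or.inr ⟨h', htI⟩⟩
    have heVc : e ⊆ (G.V)ᶜ := by rintro _ ⟨t, ht, rfl⟩; exact heV t ht
    have hmid : (x+y)/2 ∈ Ioo x y := ⟨by linarith, by linarith⟩
    set z₀ := q ((x+y)/2) with hz₀def
    have hz₀e : z₀ ∈ e := ⟨_, hmid, rfl⟩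
    have hz₀V : z₀ ∈ (G.V)ᶜ := heVc hz₀e
    set eh := connectedComponentIn (G.V)ᶜ z₀ with hehdef
    obtain ⟨hopen_eh, hcl_eh, F, hF_emb, hF_range⟩ := CGL.edge_structure G hz₀V
    rw [← hehdef] at hopen_eh hcl_eh hF_range
    have hepre : IsPreconnected e := isPreconnected_Ioo.image q hq_cont.continuousOn
    have hesub : e ⊆ eh := hepre.subset_connectedComponentIn hz₀e heVc
    have hene : e.Nonempty := ⟨z₀, hz₀e⟩
    have hclos : closure e = q '' Icc x y := hclosure_img x y hxy
    have hqxV : q x ∈ G.V := by rcases hcol with ⟨h',_⟩|⟨h',_⟩ <;> [exact hA_V h'.1; exact hB_V h'.1]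
    have hqyV : q y ∈ G.V := by rcases hcol with ⟨_,h'⟩|⟨_,h'⟩ <;> [exact hB_V h'.1; exact hA_V h'.1]
    have hehVc : eh ⊆ (G.V)ᶜ := connectedComponentIn_subset _ _
    have he_closed : closure e ∩ eh ⊆ e := by
      rintro w ⟨hw1, hw2⟩
      rw [hclos] at hw1
      obtain ⟨t, htI, rfl⟩ := hw1
      rcases eq_or_lt_of_le htI.1 with h' | h'
      · exfalso
        have hnv := hehVc hw2
        rw [← h'] at hnv
        exact hnv hqxV
      · rcases eq_or_lt_of_le htI.2 with h2 | h2
        · exfalso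
          have hnv := hehVc hw2
          rw [h2] at hnv
          exact hnv hqyV
        · exact ⟨t, ⟨h', h2⟩, rfl⟩
    have he_open : ∀ w ∈ e, w ∉ closure (eh \ e) := by
      rintro _ ⟨t, ht, rfl⟩ hwcl
      obtain ⟨c', hc'⟩ : q t ∈ range F := by rw [hF_range]; exact hesub ⟨t, ht, rfl⟩
      have hTFpre : ∀ SS : Set X, SS ⊆ eh →
          (IsPreconnected (Subtype.val '' (F ⁻¹' SS)) ↔ IsPreconnected SS) := by
        intro SS hSS
        rw [IsInducing.subtypeVal.isPreconnected_image,
          ← hF_emb.toIsInducing.isPreconnected_image,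
          image_preimage_eq_iff.mpr (by rw [hF_range]; exact hSS)]
      have hTFclos : ∀ SS : Set X, SS ⊆ eh →
          (q t ∈ closure SS ↔ (↑c' : ℝ) ∈ closure (Subtype.val '' (F ⁻¹' SS))) := by
        intro SS hSS
        rw [← CGL.mem_closure_iff_of_isEmbedding IsEmbedding.subtypeVal,
          CGL.mem_closure_iff_of_isEmbedding hF_emb (F ⁻¹' SS) c', hc',
          image_preimage_eq_iff.mpr (by rw [hF_range]; exact hSS)]
      have hTFmem : ∀ SS : Set X, ((↑c' : ℝ) ∈ Subtype.val '' (F ⁻¹' SS) ↔ q t ∈ SS) := by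
        intro SS
        constructor
        · rintro ⟨d, hd, hdc⟩
          have hdc' : d = c' := Subtype.val_injective hdc
          rwa [hdc', mem_preimage, hc'] at hd
        · intro hSS
          exact ⟨c', by rwa [mem_preimage, hc'], rfl⟩
      set G1 := q '' Ioo x t with hG1def
      set G2 := q '' Ioo t y with hG2def
      have hG1sub : G1 ⊆ e := image_mono (fun s hs => ⟨hs.1, hs.2.trans ht.2⟩)
      have hG2sub : G2 ⊆ e := image_mono (fun s hs => ⟨ht.1.trans hs.1, hs.2⟩)
      have hG1Ioo : Ioo x t ⊆ Ioo 0 π2 := fun s hs => hsubIoo ⟨hs.1, hs.2.trans ht.2⟩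
      have hG2Ioo : Ioo t y ⊆ Ioo 0 π2 := fun s hs => hsubIoo ⟨ht.1.trans hs.1, hs.2⟩
      have hqtnotG1 : q t ∉ G1 := by
        rintro ⟨s, hs, hqs⟩
        have := hq_inj (hG1Ioo hs) (hsubIoo ht) hqs
        rw [this] at hs
        exact absurd hs.2 (lt_irrefl t)
      have hqtnotG2 : q t ∉ G2 := by
        rintro ⟨s, hs, hqs⟩
        have := hq_inj (hG2Ioo hs) (hsubIoo ht) hqs
        rw [this] at hs
        exact absurd hs.1 (lt_irrefl t)
      have hG12dis : ∀ w, w ∈ G1 → w ∈ G2 → False := by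
        rintro _ ⟨s, hs, rfl⟩ ⟨s', hs', hqs⟩
        have := hq_inj (hG2Ioo hs') (hG1Ioo hs) hqs
        rw [this] at hs'
        exact absurd (hs.2.trans hs'.1) (lt_irrefl s)
      have hqtclosG1 : q t ∈ closure G1 := by
        rw [hG1def, hclosure_img x t ht.1]
        exact ⟨t, right_mem_Icc.mpr ht.1.le, rfl⟩
      have hqtclosG2 : q t ∈ closure G2 := by
        rw [hG2def, hclosure_img t y ht.2]
        exact ⟨t, left_mem_Icc.mpr ht.2.le, rfl⟩
      have hD := (hTFclos (eh \ e) diff_subset).mp hwcl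
      refine absurd hD (CGL.not_mem_closure_of_two_sided
        ((hTFpre G1 (hG1sub.trans hesub)).mpr (isPreconnected_Ioo.image q hq_cont.continuousOn))
        ((hTFpre G2 (hG2sub.trans hesub)).mpr (isPreconnected_Ioo.image q hq_cont.continuousOn))
        ?_ (fun hc => hqtnotG1 ((hTFmem G1).mp hc)) (fun hc => hqtnotG2 ((hTFmem G2).mp hc))
        ((hTFclos G1 (hG1sub.trans hesub)).mp hqtclosG1)
        ((hTFclos G2 (hG2sub.trans hesub)).mp hqtclosG2) ?_)
      · rw [Set.disjoint_left]
        rintro r ⟨d, hd, rfl⟩ ⟨d', hd', hdd⟩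
        have : d' = d := Subtype.val_injective hdd
        rw [this] at hd'
        exact hG12dis (F d) hd hd'
      · rw [Set.disjoint_left]
        rintro r ⟨d, hd, rfl⟩ hr
        rcases hr with hr | hr
        · rcases hr with hr | hr
          · obtain ⟨d', hd', hdd⟩ := hr
            have : d' = d := Subtype.val_injective hdd
            rw [this] at hd'
            exact hd.2 (hG1sub hd')
          · obtain ⟨d', hd', hdd⟩ := hr
            have : d' = d := Subtype.val_injective hdd
            rw [this] at hd'
            exact hd.2 (hG2sub hd')
        · rw [mem_singleton_iff] at hr
          have : d = c' := Subtype.val_injective hr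
          rw [this, mem_preimage, hc'] at hd
          exact hd.2 ⟨t, ht, rfl⟩
    have heh_pre : IsPreconnected eh := isPreconnected_connectedComponentIn
    have hehe : eh = e := by
      apply Subset.antisymm _ hesub
      by_contra hne'
      have hcover : eh ⊆ (closure (eh \ e))ᶜ ∪ (closure e)ᶜ := by
        intro w hw
        by_contra hc
        simp only [mem_union, mem_compl_iff, not_or, not_not] at hc
        have hwe : w ∈ e := he_closed ⟨hc.2, hw⟩
        exact he_open w hwe hc.1
      have h1 : (eh ∩ (closure (eh \ e))ᶜ).Nonempty :=
        ⟨z₀, mem_connectedComponentIn hz₀V, he_open z₀ hz₀e⟩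
      have h2 : (eh ∩ (closure e)ᶜ).Nonempty := by
        obtain ⟨w, hweh, hwe⟩ := not_subset.mp hne'
        exact ⟨w, hweh, fun hwc => hwe (he_closed ⟨hwc, hweh⟩)⟩
      obtain ⟨w, hw1, hw2, hw3⟩ := heh_pre _ _ isClosed_closure.isOpen_compl
        isClosed_closure.isOpen_compl hcover h1 h2
      have hwe : w ∉ e := fun h' => hw3 (subset_closure h')
      exact hw2 (subset_closure ⟨hw1, hwe⟩)
    refine ⟨⟨⟨z₀, hz₀V, hehe.symm.trans hehdef ▸ rfl⟩, ?_, ?_⟩, heC⟩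
    · rcases hcol with ⟨h1, _⟩ | ⟨_, h2⟩
      · exact ⟨q x, by rw [hclos]; exact ⟨x, left_mem_Icc.mpr hxy.le, rfl⟩, h1.1⟩
      · exact ⟨q y, by rw [hclos]; exact ⟨y, right_mem_Icc.mpr hxy.le, rfl⟩, h2.1⟩
    · rcases hcol with ⟨_, h2⟩ | ⟨h1, _⟩
      · exact ⟨q y, by rw [hclos]; exact ⟨y, right_mem_Icc.mpr hxy.le, rfl⟩, h2.1⟩
      · exact ⟨q x, by rw [hclos]; exact ⟨x, left_mem_Icc.mpr hxy.le, rfl⟩, h1.1⟩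
  -- ===== bijection =====
  have hinj : InjOn (fun pr : ℝ × ℝ => q '' Ioo pr.1 pr.2) (CGL.CutPairs Ah Bh) := by
    rintro ⟨x, y⟩ hxy ⟨x', y'⟩ hxy' himg
    simp only at himg
    have hIccs := hmemIcc _ hxy
    have hIccs' := hmemIcc _ hxy'
    have hsub1 : Ioo x y ⊆ Ioo 0 π2 := fun t ht =>
      ⟨lt_of_le_of_lt hIccs.1.1 ht.1, lt_of_lt_of_le ht.2 hIccs.2.2⟩
    have hsub2 : Ioo x' y' ⊆ Ioo 0 π2 := fun t ht =>
      ⟨lt_of_le_of_lt hIccs'.1.1 ht.1, lt_of_lt_of_le ht.2 hIccs'.2.2⟩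
    have hIoo : Ioo x y = Ioo x' y' := by
      ext t
      constructor
      · intro ht
        have : q t ∈ q '' Ioo x' y' := by rw [← himg]; exact ⟨t, ht, rfl⟩
        obtain ⟨s, hs, hqs⟩ := this
        rwa [hq_inj (hsub2 hs) (hsub1 ht) hqs] at hs
      · intro ht
        have : q t ∈ q '' Ioo x y := by rw [himg]; exact ⟨t, ht, rfl⟩
        obtain ⟨s, hs, hqs⟩ := this
        rwa [hq_inj (hsub1 hs) (hsub2 ht) hqs] at hs
    have hx1 : x < y := hxy.1
    have hx2 : x' < y' := hxy'.1
    have hxx : x = x' := by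
      rw [← csInf_Ioo hx1, ← csInf_Ioo hx2, hIoo]
    have hyy : y = y' := by
      rw [← csSup_Ioo hx1, ← csSup_Ioo hx2, hIoo]
    exact Prod.ext hxx hyy
  have hmain : K = (fun pr : ℝ × ℝ => q '' Ioo pr.1 pr.2) '' CGL.CutPairs Ah Bh := by
    apply Subset.antisymm
    · intro e he
      obtain ⟨pr, hpr, heq⟩ := hforward e he
      exact ⟨pr, hpr, heq.symm⟩
    · rintro _ ⟨pr, hpr, rfl⟩
      exact hbackward pr hpr
  have hfin := CGL.cutPairs_finite hAh_cl hBh_cl hABdisj hABsub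
  constructor
  · rw [hmain]; exact hfin.image _
  · rw [hmain, Set.ncard_image_of_injOn hinj]
    exact CGL.cutPairs_even hAh_cl hBh_cl hABdisj hABsub h0A hpA
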